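/- Let n ≥ 3, let P be an n×n row-stochastic matrix, and let i ∈ {1,…,n} be a leaf node with unique neighbor j ≠ i, meaning P(i,l) = 0 and P(l,i) = 0 for every l ∉ {i, j}. Then for every τ ≥ 2 and every k ∉ {i, j}, one has Σ_{t=1}^{τ} F_t(i,i) ≥ Σ_{t=1}^{τ} F_t(k,i), i.e., ℙ(T_ii ≤ τ) ≥ ℙ(T_ki ≤ τ). -/
import Mathlib


/-- First-hitting-time probability matrices: `hitF P t` is `F_{t+1}`, i.e.
`F_1 = P` and `F_{k+1} = P (F_k - Diag(F_k))`. -/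
def hitF {α : Type*} [Fintype α] [DecidableEq α] (P : Matrix α α ℝ) : ℕ → Matrix α α ℝ
  | 0 => P
  | k + 1 => P * (hitF P k - Matrix.diagonal fun i => hitF P k i i)

section Aux

variable {n : ℕ} {P : Matrix (Fin n) (Fin n) ℝ}

lemma hitF_succ_apply (P : Matrix (Fin n) (Fin n) ℝ) (t : ℕ) (a b : Fin n) :
    hitF P (t+1) a b = ∑ m, (if m = b then 0 else P a m * hitF P t m b) := by
  show (P * (hitF P t - Matrix.diagonal fun i => hitF P t i i)) a b = _
  rw [Matrix.mul_apply]
  refine Finset.sum_congr rfl fun m _ => ?_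
  by_cases h : m = b
  · subst h; simp
  · simp [Matrix.diagonal_apply_ne _ h, h]

lemma hitF_nonneg (hP0 : ∀ a b, 0 ≤ P a b) (t : ℕ) (a b : Fin n) :
    0 ≤ hitF P t a b := by
  induction t generalizing a b with
  | zero => exact hP0 a b
  | succ t ih =>
    rw [hitF_succ_apply]
    refine Finset.sum_nonneg fun m _ => ?_
    split
    · exact le_refl 0
    · exact mul_nonneg (hP0 a m) (ih m b)

lemma G_succ (P : Matrix (Fin n) (Fin n) ℝ) (σ : ℕ) (l i : Fin n) :
    ∑ t ∈ Finset.range (σ+1), hitF P t l i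
      = P l i + ∑ m, (if m = i then 0 else P l m * ∑ t ∈ Finset.range σ, hitF P t m i) := by
  rw [Finset.sum_range_succ']
  have h1 : ∑ t ∈ Finset.range σ, hitF P (t+1) l i
      = ∑ t ∈ Finset.range σ, ∑ m, (if m = i then 0 else P l m * hitF P t m i) :=
    Finset.sum_congr rfl fun t _ => hitF_succ_apply P t l i
  rw [h1, Finset.sum_comm, add_comm]
  have h0 : hitF P 0 l i = P l i := rfl
  rw [h0]
  congr 1
  refine Finset.sum_congr rfl fun m _ => ?_
  by_cases h : m = i
  · simp [h]
  · simp only [h, if_false, Finset.mul_sum]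

lemma G_nonneg (hP0 : ∀ a b, 0 ≤ P a b) (σ : ℕ) (l i : Fin n) :
    0 ≤ ∑ t ∈ Finset.range σ, hitF P t l i :=
  Finset.sum_nonneg fun t _ => hitF_nonneg hP0 t l i

lemma G_mono (hP0 : ∀ a b, 0 ≤ P a b) (σ : ℕ) (l i : Fin n) :
    ∑ t ∈ Finset.range σ, hitF P t l i ≤ ∑ t ∈ Finset.range (σ+1), hitF P t l i := by
  rw [Finset.sum_range_succ]
  exact le_add_of_nonneg_right (hitF_nonneg hP0 σ l i)

lemma G_le_one (hP0 : ∀ a b, 0 ≤ P a b) (hP1 : ∀ a, ∑ b, P a b = 1)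
    (σ : ℕ) (l i : Fin n) :
    ∑ t ∈ Finset.range σ, hitF P t l i ≤ 1 := by
  induction σ generalizing l with
  | zero => simp
  | succ σ ih =>
    rw [G_succ]
    have hb : ∑ m, (if m = i then 0 else P l m * ∑ t ∈ Finset.range σ, hitF P t m i)
        ≤ ∑ m, (if m = i then 0 else P l m) := by
      refine Finset.sum_le_sum fun m _ => ?_
      by_cases h : m = i
      · simp [h]
      · simp only [h, if_false]
        calc P l m * ∑ t ∈ Finset.range σ, hitF P t m i ≤ P l m * 1 :=
              mul_le_mul_of_nonneg_left (ih m) (hP0 l m)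
          _ = P l m := mul_one _
    have hsum : ∑ m, (if m = i then 0 else P l m) = 1 - P l i := by
      have h2 : ∑ m, (if m = i then 0 else P l m)
          = (∑ m, P l m) - ∑ m, (if m = i then P l m else 0) := by
        rw [← Finset.sum_sub_distrib]
        refine Finset.sum_congr rfl fun m _ => ?_
        by_cases h : m = i <;> simp [h]
      rw [h2, hP1 l, Finset.sum_ite_eq' Finset.univ i (fun m => P l m)]
      simp
    linarith [hb, hsum]

end Aux

/-- Dominated strategy on leaf nodes: if `i` is a leaf node with unique neighbor `j`,
then for every `τ ≥ 2` and every node `k ∉ {i, j}`,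
`ℙ(T_ii ≤ τ) ≥ ℙ(T_ki ≤ τ)`. -/
theorem stmt_9 (n : ℕ) (hn : 3 ≤ n) (P : Matrix (Fin n) (Fin n) ℝ)
    (hP0 : ∀ a b, 0 ≤ P a b) (hP1 : ∀ a, ∑ b, P a b = 1)
    (i j : Fin n) (hij : j ≠ i)
    (hleaf : ∀ l : Fin n, l ≠ i → l ≠ j → P i l = 0 ∧ P l i = 0)
    (τ : ℕ) (hτ : 2 ≤ τ) (k : Fin n) (hki : k ≠ i) (hkj : k ≠ j) :
    ∑ t ∈ Finset.range τ, hitF P t k i ≤ ∑ t ∈ Finset.range τ, hitF P t i i := by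
  -- Key claim: for any σ and any k ∉ {i,j}, G (σ+1) k ≤ G σ j.
  have key : ∀ σ : ℕ, ∀ k : Fin n, k ≠ i → k ≠ j →
      ∑ t ∈ Finset.range (σ+1), hitF P t k i ≤ ∑ t ∈ Finset.range σ, hitF P t j i := by
    intro σ
    induction σ with
    | zero =>
      intro k hki hkj
      simp only [zero_add, Finset.sum_range_one, Finset.range_zero, Finset.sum_empty]
      show P k i ≤ 0
      rw [(hleaf k hki hkj).2]
    | succ σ ih =>
      intro k hki hkj
      rw [G_succ, (hleaf k hki hkj).2, zero_add]
      have hbound : ∀ m : Fin n, m ≠ i →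
          ∑ t ∈ Finset.range (σ+1), hitF P t m i ≤ ∑ t ∈ Finset.range (σ+1), hitF P t j i := by
        intro m hmi
        by_cases hmj : m = j
        · subst hmj; exact le_refl _
        · exact le_trans (ih m hmi hmj) (G_mono hP0 σ j i)
      have h1 : ∑ m, (if m = i then 0 else P k m * ∑ t ∈ Finset.range (σ+1), hitF P t m i)
          ≤ ∑ m, (if m = i then 0 else P k m) * ∑ t ∈ Finset.range (σ+1), hitF P t j i := by
        refine Finset.sum_le_sum fun m _ => ?_
        by_cases h : m = i
        · simp [h]
        · simp only [h, if_false]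
          exact mul_le_mul_of_nonneg_left (hbound m h) (hP0 k m)
      have h2 : ∑ m, (if m = i then 0 else P k m) * ∑ t ∈ Finset.range (σ+1), hitF P t j i
          = (∑ m, (if m = i then 0 else P k m)) * ∑ t ∈ Finset.range (σ+1), hitF P t j i := by
        rw [Finset.sum_mul]
      have h3 : ∑ m, (if m = i then 0 else P k m) ≤ 1 := by
        have : ∑ m, (if m = i then 0 else P k m) ≤ ∑ m, P k m := by
          refine Finset.sum_le_sum fun m _ => ?_
          by_cases h : m = i
          · simp [h]; exact hP0 k i
          · simp [h]
        rw [hP1 k] at this; exact this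
      have h4 : 0 ≤ ∑ m, (if m = i then 0 else P k m) := by
        refine Finset.sum_nonneg fun m _ => ?_
        by_cases h : m = i <;> simp [h, hP0 k m]
      calc ∑ m, (if m = i then 0 else P k m * ∑ t ∈ Finset.range (σ+1), hitF P t m i)
          ≤ (∑ m, (if m = i then 0 else P k m)) * ∑ t ∈ Finset.range (σ+1), hitF P t j i := by
            rw [← h2]; exact h1
        _ ≤ 1 * ∑ t ∈ Finset.range (σ+1), hitF P t j i :=
            mul_le_mul_of_nonneg_right h3 (G_nonneg hP0 _ j i)
        _ = ∑ t ∈ Finset.range (σ+1), hitF P t j i := one_mul _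
  -- Now handle the goal. Write τ = σ+1.
  obtain ⟨σ, rfl⟩ : ∃ σ, τ = σ + 1 := ⟨τ - 1, by omega⟩
  -- G (σ+1) i = P i i + P i j * G σ j
  have hGi : ∑ t ∈ Finset.range (σ+1), hitF P t i i
      = P i i + P i j * ∑ t ∈ Finset.range σ, hitF P t j i := by
    rw [G_succ]
    congr 1
    rw [Finset.sum_eq_single j]
    · simp [hij]
    · intro m _ hmj
      by_cases h : m = i
      · simp [h]
      · simp [h, (hleaf m h hmj).1]
    · simp
  have hrow : P i i + P i j = 1 := by
    have h2 : ∑ m, P i m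
        = ∑ m, ((if m = i then P i i else 0) + (if m = j then P i j else 0)) := by
      refine Finset.sum_congr rfl fun m _ => ?_
      by_cases h : m = i
      · subst h; simp [Ne.symm hij]
      · by_cases h' : m = j
        · subst h'; simp [h]
        · simp [h, h', (hleaf m h h').1]
    simp only [Finset.sum_add_distrib, Finset.sum_ite_eq' Finset.univ,
      Finset.mem_univ, if_true] at h2
    rw [← hP1 i, h2]
  have hGj1 : ∑ t ∈ Finset.range σ, hitF P t j i ≤ 1 := G_le_one hP0 hP1 σ j i
  have hGj0 : 0 ≤ ∑ t ∈ Finset.range σ, hitF P t j i := G_nonneg hP0 σ j i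
  have hkey := key σ k hki hkj
  have hPii : 0 ≤ P i i := hP0 i i
  nlinarith [hkey, hGi, hrow, hGj1, hGj0, hPii]
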